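/- Let (Ω, μ) be a probability space and X : ℕ → Ω → ℝ an i.i.d. sequence with μ(X_i = Δ_H) = p+ε and μ(X_i = −Δ_T) = q−ε. For B > 0 let S_n = Σ_{i<n} X_i, τ_B = inf{n ≥ 1 : S_n ≥ B or S_n < 0}, D(B) = E[τ_B] (the expected number of steps to absorption), and π(B) = μ{ω : τ_B(ω) < ∞ and S_{τ_B(ω)}(ω) ≥ B}. Then there exists B₀ > 0 (depending only on p and ε) such that for all B ≥ B₀: D(B)/π(B) ≤ (8B/(Δ_H·(p+ε) − Δ_T·(q−ε))) · ((Δ_H+Δ_T)/(Δ_H·(p+ε))). -/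

import Mathlib

open MeasureTheory ProbabilityTheory

set_option maxHeartbeats 2000000 in
open Classical in

/-- For the heavy-coin log-likelihood random walk with upper barrier `B` and lower barriers
below `0`, writing `D(B)` for the expected absorption time and `π(B)` for the probability of
absorption at `B`, there is a threshold `B₀ > 0` depending only on `p` and `ε` such that for
all `B ≥ B₀`, `D(B)/π(B) ≤ (8B/(Δ_H(p+ε) − Δ_T(q−ε)))·((Δ_H+Δ_T)/(Δ_H(p+ε)))`. -/
theorem heavy_expected_time_over_absorption_prob
    (ε p : ℝ) (hε : ε ∈ Set.Ioo (0:ℝ) (1/2)) (hp : p ∈ Set.Ioo ε (1 - ε))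
    (q ΔH ΔT : ℝ) (hq : q = 1 - p)
    (hΔH : ΔH = Real.log ((p + ε) / (p - ε)))
    (hΔT : ΔT = Real.log ((q + ε) / (q - ε))) :
    ∃ B₀ : ℝ, 0 < B₀ ∧
      ∀ (Ω : Type) [MeasurableSpace Ω] (P : Measure Ω) [IsProbabilityMeasure P]
        (X : ℕ → Ω → ℝ), (∀ i, Measurable (X i)) →
        iIndepFun X P →
        (∀ i, P {ω | X i ω = ΔH} = ENNReal.ofReal (p + ε)) →
        (∀ i, P {ω | X i ω = -ΔT} = ENNReal.ofReal (q - ε)) →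
        ∀ (B : ℝ), B₀ ≤ B →
        ∀ (S : ℕ → Ω → ℝ), (∀ n ω, S n ω = ∑ i ∈ Finset.range n, X i ω) →
        ∀ (hit : Ω → Set ℕ),
          (∀ ω, hit ω = {n : ℕ | 1 ≤ n ∧ (B ≤ S n ω ∨ S n ω < 0)}) →
          (∫⁻ ω, (if (hit ω).Nonempty then ((sInf (hit ω) : ℕ) : ENNReal) else ⊤) ∂P) /
              P {ω | (hit ω).Nonempty ∧ B ≤ S (sInf (hit ω)) ω}
            ≤ ENNReal.ofReal
                ((8 * B / (ΔH * (p + ε) - ΔT * (q - ε))) * ((ΔH + ΔT) / (ΔH * (p + ε)))) := by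
  obtain ⟨hε0, hε2⟩ := hε
  obtain ⟨hpε, hp1⟩ := hp
  have hb : (0:ℝ) < p - ε := by linarith
  have ha : (0:ℝ) < p + ε := by linarith
  have ha' : (0:ℝ) < q - ε := by rw [hq]; linarith
  have hb' : (0:ℝ) < q + ε := by rw [hq]; linarith
  have hΔHpos : 0 < ΔH := by
    rw [hΔH]; exact Real.log_pos (by rw [lt_div_iff₀ hb]; linarith)
  have hΔTpos : 0 < ΔT := by
    rw [hΔT]; exact Real.log_pos (by rw [lt_div_iff₀ ha']; linarith)
  set m : ℝ := ΔH * (p + ε) - ΔT * (q - ε) with hmdef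
  -- positivity of the drift `m`
  have hm : 0 < m := by
    have h1 : Real.log ((p - ε) / (p + ε)) < (p - ε) / (p + ε) - 1 :=
      Real.log_lt_sub_one_of_pos (div_pos hb ha)
        (by
          intro h
          have := (div_eq_one_iff_eq ha.ne').mp h
          linarith)
    have h2 : Real.log ((q + ε) / (q - ε)) < (q + ε) / (q - ε) - 1 :=
      Real.log_lt_sub_one_of_pos (div_pos hb' ha')
        (by
          intro h
          have := (div_eq_one_iff_eq ha'.ne').mp h
          linarith)
    have hH' : ΔH = - Real.log ((p - ε) / (p + ε)) := by
      rw [hΔH, Real.log_div hb.ne' ha.ne', Real.log_div ha.ne' hb.ne']; ring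
    have e1 : ((p - ε) / (p + ε)) * (p + ε) = p - ε := div_mul_cancel₀ _ ha.ne'
    have e2 : ((q + ε) / (q - ε)) * (q - ε) = q + ε := div_mul_cancel₀ _ ha'.ne'
    have h1' := mul_lt_mul_of_pos_right h1 ha
    have h2' := mul_lt_mul_of_pos_right h2 ha'
    have hT2 : ΔT * (q - ε) < 2 * ε := by rw [hΔT]; nlinarith [h2', e2]
    have hH2 : 2 * ε < ΔH * (p + ε) := by rw [hH']; nlinarith [h1', e1]
    simp only [hmdef]; linarith
  refine ⟨max ΔH 1, lt_of_lt_of_le one_pos (le_max_right _ _), ?_⟩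
  intro Ω mΩ P hP X hXm hXindep hH hT B hB S hS hit hhit
  have hBpos : 0 < B := lt_of_lt_of_le (lt_of_lt_of_le one_pos (le_max_right _ _)) hB
  have hBH : ΔH ≤ B := le_trans (le_max_left _ _) hB
  have hSmeas : ∀ n, Measurable (S n) := by
    intro n
    rw [show S n = fun ω => ∑ i ∈ Finset.range n, X i ω from funext (hS n)]
    exact Finset.measurable_sum _ fun i _ => hXm i
  -- the "not yet absorbed by time n" events
  set A : ℕ → Set Ω := fun n => {ω | ∀ j, 1 ≤ j → j ≤ n → 0 ≤ S j ω ∧ S j ω < B} with hAdef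
  have hA_iff : ∀ n ω, ω ∈ A n ↔ ∀ j ≤ n, j ∉ hit ω := by
    intro n ω
    constructor
    · intro h j hjn hjhit
      rw [hhit] at hjhit
      obtain ⟨hj1, hj2⟩ := hjhit
      have := h j hj1 hjn
      rcases hj2 with h' | h' <;> linarith [this.1, this.2]
    · intro h j hj1 hjn
      have hj := h j hjn
      rw [hhit] at hj
      simp only [Set.mem_setOf_eq, not_and, not_or, not_le, not_lt] at hj
      have := hj hj1
      exact ⟨this.2, this.1⟩
  have hAmeas : ∀ n, MeasurableSet (A n) := by
    intro n
    have : A n = ⋂ (j : ℕ) (_ : 1 ≤ j) (_ : j ≤ n),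
        ((S j) ⁻¹' (Set.Ici 0) ∩ (S j) ⁻¹' (Set.Iio B)) := by
      ext ω; simp only [hAdef, Set.mem_setOf_eq, Set.mem_iInter, Set.mem_inter_iff,
        Set.mem_preimage, Set.mem_Ici, Set.mem_Iio]
    rw [this]
    exact MeasurableSet.iInter fun j => MeasurableSet.iInter fun _ =>
      MeasurableSet.iInter fun _ =>
        ((hSmeas j measurableSet_Ici).inter (hSmeas j measurableSet_Iio))
  have hAanti : ∀ {k n : ℕ}, k ≤ n → A n ⊆ A k := by
    intro k n hkn ω hω j hj1 hjk
    exact hω j hj1 (le_trans hjk hkn)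
  have hA0 : A 0 = Set.univ := by
    ext ω; simp only [hAdef, Set.mem_setOf_eq, Set.mem_univ, iff_true]
    intro j hj1 hj0; omega
  -- stopped time truncated at n
  set T : ℕ → Ω → ℕ := fun n ω => if (hit ω).Nonempty then min (sInf (hit ω)) n else n with hTdef
  have hTstop : ∀ n ω, ω ∈ A n → T n ω = n := by
    intro n ω hω
    simp only [hTdef]
    split_ifs with hne
    · have hlt : n < sInf (hit ω) := by
        by_contra hle
        exact (hA_iff n ω).mp hω _ (not_lt.mp hle) (Nat.sInf_mem hne)
      exact min_eq_right hlt.le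
    · rfl
  have hTtele : ∀ n ω, S (T (n+1) ω) ω = S (T n ω) ω + (A n).indicator (X n) ω := by
    intro n ω
    by_cases hω : ω ∈ A n
    · have h1 : T n ω = n := hTstop n ω hω
      have h2 : T (n+1) ω = n + 1 := by
        simp only [hTdef]
        split_ifs with hne
        · have hlt : n < sInf (hit ω) := by
            by_contra hle
            exact (hA_iff n ω).mp hω _ (not_lt.mp hle) (Nat.sInf_mem hne)
          exact min_eq_right hlt
        · rfl
      rw [h1, h2, Set.indicator_of_mem hω, hS, hS, Finset.sum_range_succ]
    · obtain ⟨j, hjn, hjhit⟩ : ∃ j ≤ n, j ∈ hit ω := by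
        by_contra h; push_neg at h
        exact hω ((hA_iff n ω).mpr h)
      have hne : (hit ω).Nonempty := ⟨j, hjhit⟩
      have hle : sInf (hit ω) ≤ n := le_trans (Nat.sInf_le hjhit) hjn
      have h1 : T n ω = sInf (hit ω) := by
        simp only [hTdef, if_pos hne]; exact min_eq_left hle
      have h2 : T (n+1) ω = sInf (hit ω) := by
        simp only [hTdef, if_pos hne]; exact min_eq_left (le_trans hle n.le_succ)
      rw [h1, h2, Set.indicator_of_notMem hω, add_zero]
  have hfsum : ∀ n ω, S (T n ω) ω = ∑ k ∈ Finset.range n, (A k).indicator (X k) ω := by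
    intro n ω
    induction n with
    | zero =>
      have hT0 : T 0 ω = 0 := by simp [hTdef]
      rw [hT0, hS]; simp
    | succ n ih => rw [Finset.sum_range_succ, ← ih, hTtele]
  -- almost-every ω takes only the two step values
  set G : Set Ω := {ω | ∀ k, X k ω = ΔH ∨ X k ω = -ΔT} with hGdef
  have hHmeas : ∀ k, MeasurableSet {ω | X k ω = ΔH} := fun k =>
    hXm k (measurableSet_singleton ΔH)
  have hTmeas : ∀ k, MeasurableSet {ω | X k ω = -ΔT} := fun k =>
    hXm k (measurableSet_singleton (-ΔT))
  have hGae : ∀ᵐ ω ∂P, ω ∈ G := by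
    have hnull : ∀ k, P ({ω | X k ω = ΔH} ∪ {ω | X k ω = -ΔT})ᶜ = 0 := by
      intro k
      have hdisj : Disjoint {ω | X k ω = ΔH} {ω | X k ω = -ΔT} := by
        rw [Set.disjoint_left]
        intro ω h1 h2
        simp only [Set.mem_setOf_eq] at h1 h2
        rw [h1] at h2; linarith
      have hu : P ({ω | X k ω = ΔH} ∪ {ω | X k ω = -ΔT}) = 1 := by
        rw [measure_union hdisj (hTmeas k), hH k, hT k,
          ← ENNReal.ofReal_add ha.le ha'.le,
          show p + ε + (q - ε) = 1 by rw [hq]; ring, ENNReal.ofReal_one]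
      rw [measure_compl ((hHmeas k).union (hTmeas k)) (measure_ne_top _ _), hu,
        measure_univ, tsub_self]
    have hsub : Gᶜ ⊆ ⋃ k, ({ω | X k ω = ΔH} ∪ {ω | X k ω = -ΔT})ᶜ := by
      intro ω hω
      simp only [hGdef, Set.mem_compl_iff, Set.mem_setOf_eq, not_forall] at hω
      obtain ⟨k, hk⟩ := hω
      refine Set.mem_iUnion.mpr ⟨k, ?_⟩
      simp only [Set.mem_compl_iff, Set.mem_union, Set.mem_setOf_eq]
      tauto
    have h0 := measure_mono_null hsub (measure_iUnion_null fun k => hnull k)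
    rw [ae_iff]
    exact h0
  -- the absorption-at-the-top event
  set E : Set Ω := {ω | (hit ω).Nonempty ∧ B ≤ S (sInf (hit ω)) ω} with hEdef
  -- pointwise bound on the stopped walk
  have hbound : ∀ ω ∈ G, ∀ n, S (T n ω) ω ≤
      E.indicator (fun _ => B + ΔH) ω + (A n).indicator (fun _ => B) ω := by
    intro ω hω n
    have hEnn : 0 ≤ E.indicator (fun _ => B + ΔH) ω :=
      Set.indicator_nonneg (fun _ _ => by linarith) ω
    have hAnn : 0 ≤ (A n).indicator (fun _ => B) ω :=
      Set.indicator_nonneg (fun _ _ => hBpos.le) ω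
    by_cases hA' : ω ∈ A n
    · rw [hTstop n ω hA', Set.indicator_of_mem hA']
      rcases Nat.eq_zero_or_pos n with h0 | h0
      · subst h0
        rw [hS]
        simp only [Finset.range_zero, Finset.sum_empty]
        linarith
      · have hlast := hA' n h0 le_rfl
        linarith [hlast.2]
    · obtain ⟨j, hjn, hjhit⟩ : ∃ j ≤ n, j ∈ hit ω := by
        by_contra h; push_neg at h
        exact hA' ((hA_iff n ω).mpr h)
      have hne : (hit ω).Nonempty := ⟨j, hjhit⟩
      have hle : sInf (hit ω) ≤ n := le_trans (Nat.sInf_le hjhit) hjn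
      have hTn : T n ω = sInf (hit ω) := by
        simp only [hTdef, if_pos hne]; exact min_eq_left hle
      have hmem := Nat.sInf_mem hne
      nth_rewrite 1 [hhit ω] at hmem
      obtain ⟨h1τ, hor⟩ := hmem
      rw [hTn]
      rcases hor with htop | hbot
      · have hωE : ω ∈ E := ⟨hne, htop⟩
        rw [Set.indicator_of_mem hωE, Set.indicator_of_notMem hA', add_zero]
        obtain ⟨k, hk⟩ : ∃ k, sInf (hit ω) = k + 1 := ⟨sInf (hit ω) - 1, by omega⟩
        have hXk : X k ω ≤ ΔH := by rcases hω k with h | h <;> rw [h] <;> linarith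
        have hSk : S k ω ≤ B := by
          rcases Nat.eq_zero_or_pos k with h0 | h0
          · subst h0
            rw [hS]
            simp only [Finset.range_zero, Finset.sum_empty]
            linarith
          · have hknot : k ∉ hit ω := Nat.notMem_of_lt_sInf (by omega)
            rw [hhit] at hknot
            simp only [Set.mem_setOf_eq, not_and, not_or, not_le, not_lt] at hknot
            have h' := hknot h0
            linarith [h'.1]
        have hsplit : S (k+1) ω = S k ω + X k ω := by
          rw [hS, hS, Finset.sum_range_succ]
        rw [hk, hsplit]; linarith
      · linarith
  -- measurability of `E`
  have hEmeas : MeasurableSet E := by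
    have hEeq : E = ⋃ n, (A n ∩ (S (n+1)) ⁻¹' (Set.Ici B)) := by
      ext ω
      simp only [hEdef, Set.mem_setOf_eq, Set.mem_iUnion, Set.mem_inter_iff, Set.mem_preimage,
        Set.mem_Ici]
      constructor
      · rintro ⟨hne, htop⟩
        have hmem := Nat.sInf_mem hne
        nth_rewrite 1 [hhit ω] at hmem
        have h1 : 1 ≤ sInf (hit ω) := hmem.1
        obtain ⟨k, hk⟩ : ∃ k, sInf (hit ω) = k + 1 := ⟨sInf (hit ω) - 1, by omega⟩
        refine ⟨k, ?_, by rw [← hk]; exact htop⟩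
        rw [hA_iff]
        intro j hjk
        exact Nat.notMem_of_lt_sInf (by omega)
      · rintro ⟨n, hAn, htop⟩
        have hmem : n + 1 ∈ hit ω := by
          rw [hhit]; exact ⟨Nat.succ_le_succ (Nat.zero_le n), Or.inl htop⟩
        have hne : (hit ω).Nonempty := ⟨_, hmem⟩
        have hinf : sInf (hit ω) = n + 1 := by
          refine le_antisymm (Nat.sInf_le hmem) ?_
          by_contra hlt
          push_neg at hlt
          exact (hA_iff n ω).mp hAn _ (by omega) (Nat.sInf_mem hne)
        exact ⟨hne, by rw [hinf]; exact htop⟩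
    rw [hEeq]
    exact MeasurableSet.iUnion fun n => (hAmeas n).inter (hSmeas (n+1) measurableSet_Ici)
  -- independence: the event `A k` is independent of the step `X k`
  have hkey : ∀ (k : ℕ) (s : Set ℝ), MeasurableSet s →
      P (A k ∩ X k ⁻¹' s) = P (A k) * P (X k ⁻¹' s) := by
    intro k s hs
    have h_le : ∀ i : ℕ, MeasurableSpace.comap (X i) inferInstance ≤ mΩ := fun i =>
      (hXm i).comap_le
    have hind := indep_biSup_compl h_le hXindep.iIndep {i | i < k}
    have hAk : MeasurableSet[⨆ i ∈ {i : ℕ | i < k},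
        MeasurableSpace.comap (X i) inferInstance] (A k) := by
      set M := ⨆ i ∈ {i : ℕ | i < k}, MeasurableSpace.comap (X i) inferInstance with hM
      have hXM : ∀ i, i < k → Measurable[M] (X i) := by
        intro i hi
        rw [measurable_iff_comap_le]
        exact le_biSup (fun i : ℕ => MeasurableSpace.comap (X i) inferInstance)
          (show i ∈ {i : ℕ | i < k} from hi)
      have hSM : ∀ j, j ≤ k → Measurable[M] (S j) := by
        intro j hj
        rw [show S j = fun ω => ∑ i ∈ Finset.range j, X i ω from funext (hS j)]
        exact Finset.measurable_sum _ fun i hi =>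
          hXM i (lt_of_lt_of_le (Finset.mem_range.mp hi) hj)
      have hAeq : A k = ⋂ (j : ℕ) (_ : 1 ≤ j) (_ : j ≤ k),
          ((S j) ⁻¹' (Set.Ici 0) ∩ (S j) ⁻¹' (Set.Iio B)) := by
        ext ω; simp only [hAdef, Set.mem_setOf_eq, Set.mem_iInter, Set.mem_inter_iff,
          Set.mem_preimage, Set.mem_Ici, Set.mem_Iio]
      rw [hAeq]
      exact MeasurableSet.iInter fun j => MeasurableSet.iInter fun _ =>
        MeasurableSet.iInter fun h2 =>
          ((hSM j h2) measurableSet_Ici).inter ((hSM j h2) measurableSet_Iio)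
    have hXk : MeasurableSet[⨆ i ∈ {i : ℕ | i < k}ᶜ,
        MeasurableSpace.comap (X i) inferInstance] (X k ⁻¹' s) := by
      have hkmem : k ∈ {i : ℕ | i < k}ᶜ := by simp
      have hle : MeasurableSpace.comap (X k) inferInstance ≤
          ⨆ i ∈ {i : ℕ | i < k}ᶜ, MeasurableSpace.comap (X i) inferInstance :=
        le_biSup (fun i : ℕ => MeasurableSpace.comap (X i) inferInstance) hkmem
      exact hle _ ⟨s, hs, rfl⟩
    exact (hind.indepSet_of_measurableSet hAk hXk).measure_inter_eq_mul
  -- expected value of one indicator-weighted step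
  have hAHint : ∀ (s : Set Ω), MeasurableSet s → ∀ (c : ℝ),
      Integrable (s.indicator fun _ => c) P := fun s hs c => (integrable_const c).indicator hs
  have hstep : ∀ k, Integrable ((A k).indicator (X k)) P ∧
      ∫ ω, (A k).indicator (X k) ω ∂P = m * (P (A k)).toReal := by
    intro k
    have hne' : ΔH ≠ -ΔT := by intro h; linarith
    set g : Ω → ℝ := fun ω => ((A k) ∩ X k ⁻¹' {ΔH}).indicator (fun _ => ΔH) ω
        + ((A k) ∩ X k ⁻¹' {-ΔT}).indicator (fun _ => -ΔT) ω with hgdef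
    have hmeas1 : MeasurableSet ((A k) ∩ X k ⁻¹' {ΔH}) :=
      (hAmeas k).inter (hXm k (measurableSet_singleton _))
    have hmeas2 : MeasurableSet ((A k) ∩ X k ⁻¹' {-ΔT}) :=
      (hAmeas k).inter (hXm k (measurableSet_singleton _))
    have hae : (fun ω => (A k).indicator (X k) ω) =ᵐ[P] g := by
      filter_upwards [hGae] with ω hω
      by_cases hA' : ω ∈ A k
      · rcases hω k with h | h
        · have hm1 : ω ∈ (A k) ∩ X k ⁻¹' {ΔH} := ⟨hA', h⟩
          have hm2 : ω ∉ (A k) ∩ X k ⁻¹' {-ΔT} := by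
            rintro ⟨-, h2⟩
            rw [Set.mem_preimage, Set.mem_singleton_iff] at h2
            rw [h] at h2; exact hne' h2
          rw [hgdef]
          simp only [Set.indicator_of_mem hA', Set.indicator_of_mem hm1,
            Set.indicator_of_notMem hm2, add_zero, h]
        · have hm1 : ω ∉ (A k) ∩ X k ⁻¹' {ΔH} := by
            rintro ⟨-, h2⟩
            rw [Set.mem_preimage, Set.mem_singleton_iff] at h2
            rw [h] at h2; exact hne' h2.symm
          have hm2 : ω ∈ (A k) ∩ X k ⁻¹' {-ΔT} := ⟨hA', h⟩
          rw [hgdef]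
          simp only [Set.indicator_of_mem hA', Set.indicator_of_mem hm2,
            Set.indicator_of_notMem hm1, zero_add, h]
      · have hm1 : ω ∉ (A k) ∩ X k ⁻¹' {ΔH} := fun h => hA' h.1
        have hm2 : ω ∉ (A k) ∩ X k ⁻¹' {-ΔT} := fun h => hA' h.1
        rw [hgdef]
        simp only [Set.indicator_of_notMem hA', Set.indicator_of_notMem hm1,
          Set.indicator_of_notMem hm2, add_zero]
    have hgint : Integrable g P := (hAHint _ hmeas1 _).add (hAHint _ hmeas2 _)
    have hint : Integrable ((A k).indicator (X k)) P := hgint.congr hae.symm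
    refine ⟨hint, ?_⟩
    rw [integral_congr_ae hae, hgdef]
    rw [integral_add (hAHint _ hmeas1 _) (hAHint _ hmeas2 _),
      integral_indicator_const _ hmeas1, integral_indicator_const _ hmeas2,
      measureReal_def, measureReal_def,
      hkey k _ (measurableSet_singleton ΔH), hkey k _ (measurableSet_singleton (-ΔT)),
      show X k ⁻¹' {ΔH} = {ω | X k ω = ΔH} from rfl,
      show X k ⁻¹' {-ΔT} = {ω | X k ω = -ΔT} from rfl,
      hH k, hT k, ENNReal.toReal_mul, ENNReal.toReal_mul,
      ENNReal.toReal_ofReal ha.le, ENNReal.toReal_ofReal ha'.le]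
    simp only [smul_eq_mul, hmdef]
    ring
  -- the main inequality for every finite horizon
  have hmain : ∀ n, m * ∑ k ∈ Finset.range n, (P (A k)).toReal
      ≤ (B + ΔH) * (P E).toReal + B * (P (A n)).toReal := by
    intro n
    have hsum_eq : ∫ ω, (∑ k ∈ Finset.range n, (A k).indicator (X k) ω) ∂P
        = ∑ k ∈ Finset.range n, m * (P (A k)).toReal := by
      rw [integral_finset_sum _ fun k _ => (hstep k).1]
      exact Finset.sum_congr rfl fun k _ => (hstep k).2
    have hle : ∫ ω, (∑ k ∈ Finset.range n, (A k).indicator (X k) ω) ∂P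
        ≤ ∫ ω, (E.indicator (fun _ => B + ΔH) ω + (A n).indicator (fun _ => B) ω) ∂P := by
      refine integral_mono_ae (integrable_finset_sum _ fun k _ => (hstep k).1)
        ((hAHint E hEmeas _).add (hAHint (A n) (hAmeas n) _)) ?_
      filter_upwards [hGae] with ω hω
      rw [← hfsum n ω]
      exact hbound ω hω n
    rw [hsum_eq] at hle
    rw [integral_add (hAHint E hEmeas _) (hAHint (A n) (hAmeas n) _),
      integral_indicator_const _ hEmeas, integral_indicator_const _ (hAmeas n),
      measureReal_def, measureReal_def,
      smul_eq_mul, smul_eq_mul] at hle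
    calc m * ∑ k ∈ Finset.range n, (P (A k)).toReal
        = ∑ k ∈ Finset.range n, m * (P (A k)).toReal := by rw [Finset.mul_sum]
      _ ≤ (P E).toReal * (B + ΔH) + (P (A n)).toReal * B := hle
      _ = (B + ΔH) * (P E).toReal + B * (P (A n)).toReal := by ring
  -- summability and the limit
  set r : ℕ → ℝ := fun k => (P (A k)).toReal with hrdef
  have hrnn : ∀ k, 0 ≤ r k := fun k => ENNReal.toReal_nonneg
  have hr1 : ∀ k, r k ≤ 1 := fun k => by
    simpa using ENNReal.toReal_mono (by simp) (prob_le_one (μ := P) (s := A k))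
  have hpiR1 : (P E).toReal ≤ 1 := by
    simpa using ENNReal.toReal_mono (by simp) (prob_le_one (μ := P) (s := E))
  have hrsumbd : ∀ n, ∑ k ∈ Finset.range n, r k ≤ ((B + ΔH) + B) / m := by
    intro n
    have h1 := hmain n
    have h2 : (B + ΔH) * (P E).toReal ≤ (B + ΔH) * 1 :=
      mul_le_mul_of_nonneg_left hpiR1 (by linarith)
    have h3 : B * r n ≤ B * 1 := mul_le_mul_of_nonneg_left (hr1 n) hBpos.le
    rw [le_div_iff₀ hm, mul_comm]
    linarith
  have hsummable : Summable r := summable_of_sum_range_le hrnn hrsumbd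
  have hrtend : Filter.Tendsto r Filter.atTop (nhds 0) := hsummable.tendsto_atTop_zero
  have hlim : m * ∑' k, r k ≤ (B + ΔH) * (P E).toReal := by
    have h1 : Filter.Tendsto (fun n => m * ∑ k ∈ Finset.range n, r k) Filter.atTop
        (nhds (m * ∑' k, r k)) := (hsummable.hasSum.tendsto_sum_nat).const_mul m
    have h2 : Filter.Tendsto (fun n => (B + ΔH) * (P E).toReal + B * r n) Filter.atTop
        (nhds ((B + ΔH) * (P E).toReal + B * 0)) :=
      tendsto_const_nhds.add (hrtend.const_mul B)
    have := le_of_tendsto_of_tendsto' h1 h2 fun n => hmain n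
    simpa using this
  -- identification of the expected absorption time
  have hDeq : (∫⁻ ω, (if (hit ω).Nonempty then ((sInf (hit ω) : ℕ) : ENNReal) else ⊤) ∂P)
      = ENNReal.ofReal (∑' k, r k) := by
    have hpt : ∀ ω, (if (hit ω).Nonempty then ((sInf (hit ω) : ℕ) : ENNReal) else ⊤)
        = ∑' n : ℕ, (A n).indicator (fun _ => (1 : ENNReal)) ω := by
      intro ω
      by_cases hne : (hit ω).Nonempty
      · rw [if_pos hne]
        have hmemiff : ∀ n, ω ∈ A n ↔ n < sInf (hit ω) := by
          intro n
          rw [hA_iff]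
          constructor
          · intro h
            by_contra hle
            exact h _ (not_lt.mp hle) (Nat.sInf_mem hne)
          · intro h j hj
            exact Nat.notMem_of_lt_sInf (by omega)
        rw [tsum_eq_sum (s := Finset.range (sInf (hit ω)))
          (fun n hn => Set.indicator_of_notMem
            (fun hmem => hn (Finset.mem_range.mpr ((hmemiff n).mp hmem))) _)]
        rw [Finset.sum_congr rfl fun n hn =>
          Set.indicator_of_mem ((hmemiff n).mpr (Finset.mem_range.mp hn)) _]
        simp
      · rw [if_neg hne]
        have hall : ∀ n, ω ∈ A n := fun n => (hA_iff n ω).mpr fun j _ hj => hne ⟨j, hj⟩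
        rw [tsum_congr fun n => Set.indicator_of_mem (hall n) (fun _ => (1 : ENNReal))]
        exact (ENNReal.tsum_const_eq_top_of_ne_zero one_ne_zero).symm
    calc (∫⁻ ω, (if (hit ω).Nonempty then ((sInf (hit ω) : ℕ) : ENNReal) else ⊤) ∂P)
        = ∫⁻ ω, ∑' n : ℕ, (A n).indicator (fun _ => (1 : ENNReal)) ω ∂P :=
          lintegral_congr hpt
      _ = ∑' n : ℕ, ∫⁻ ω, (A n).indicator (fun _ => (1 : ENNReal)) ω ∂P :=
          lintegral_tsum fun n => (measurable_const.indicator (hAmeas n)).aemeasurable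
      _ = ∑' n : ℕ, P (A n) := by
          refine tsum_congr fun n => ?_
          rw [lintegral_indicator_const (hAmeas n), one_mul]
      _ = ∑' n : ℕ, ENNReal.ofReal (r n) :=
          tsum_congr fun n => (ENNReal.ofReal_toReal (measure_ne_top P _)).symm
      _ = ENNReal.ofReal (∑' k, r k) := (ENNReal.ofReal_tsum_of_nonneg hrnn hsummable).symm
  -- positivity of the absorption probability
  have hr0 : r 0 = 1 := by simp [hrdef, hA0]
  have htsum1 : (1:ℝ) ≤ ∑' k, r k := hr0 ▸ Summable.le_tsum hsummable 0 fun j _ => hrnn j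
  have hpiRpos : 0 < (P E).toReal := by
    by_contra hc
    push_neg at hc
    have hle0 : (B + ΔH) * (P E).toReal ≤ 0 :=
      mul_nonpos_of_nonneg_of_nonpos (by linarith) hc
    have h4 : m * 1 ≤ m * ∑' k, r k := mul_le_mul_of_nonneg_left htsum1 hm.le
    linarith
  -- conclusion
  have hPE : P E = ENNReal.ofReal (P E).toReal := (ENNReal.ofReal_toReal (measure_ne_top P E)).symm
  rw [hDeq, hPE, ← ENNReal.ofReal_div_of_pos hpiRpos]
  apply ENNReal.ofReal_le_ofReal
  have hstep1 : (∑' k, r k) / (P E).toReal ≤ (B + ΔH) / m := by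
    rw [div_le_div_iff₀ hpiRpos hm]
    linarith [hlim]
  have hc1 : 1 ≤ (ΔH + ΔT) / (ΔH * (p + ε)) := by
    rw [le_div_iff₀ (by positivity)]
    have : ΔH * (p + ε) ≤ ΔH * 1 := mul_le_mul_of_nonneg_left (by linarith) hΔHpos.le
    linarith
  have hstep2 : (B + ΔH) / m ≤ 8 * B / m * ((ΔH + ΔT) / (ΔH * (p + ε))) := by
    rw [div_mul_eq_mul_div, div_le_div_iff₀ hm hm]
    have h8 : 8 * B * 1 ≤ 8 * B * ((ΔH + ΔT) / (ΔH * (p + ε))) :=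
      mul_le_mul_of_nonneg_left hc1 (by positivity)
    nlinarith [hm]
  linarith
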